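/- Let (A, μ, α) be a W*-dynamical system. In the GNS representation, set θ_g(a) = U_g a U_g* for a ∈ π_μ(A), and let H₀ ⊆ H_μ be the closed span of the eigenvectors of U. Then T := {a ∈ π_μ(A) : aΩ_μ ∈ H₀} is a weakly closed linear subspace of B(H_μ) which satisfies θ_g(T) = T for all g ∈ G. -/

import Mathlib

noncomputable section

/-- Conjugation of a bounded operator by a unitary (surjective linear isometry). -/
def conjAct {H : Type*} [NormedAddCommGroup H] [InnerProductSpace ℂ H]
    (u : H ≃ₗᵢ[ℂ] H) (a : H →L[ℂ] H) : H →L[ℂ] H :=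
  u.toLinearIsometry.toContinuousLinearMap ∘L a ∘L
    u.symm.toLinearIsometry.toContinuousLinearMap

lemma conjAct_apply {H : Type*} [NormedAddCommGroup H] [InnerProductSpace ℂ H]
    (u : H ≃ₗᵢ[ℂ] H) (a : H →L[ℂ] H) (x : H) : conjAct u a x = u (a (u.symm x)) := rfl

/-- The image under `toWOT` of the centralizer of any set of operators is WOT-closed. -/
lemma isClosed_image_centralizer {H : Type*} [NormedAddCommGroup H] [InnerProductSpace ℂ H]
    [CompleteSpace H] (S : Set (H →L[ℂ] H)) :
    IsClosed ((ContinuousLinearMapWOT.ofCLM : (H →L[ℂ] H) → (H →WOT[ℂ] H)) '' (Set.centralizer S)) := by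
  have himg : (ContinuousLinearMapWOT.ofCLM : (H →L[ℂ] H) → (H →WOT[ℂ] H)) '' (Set.centralizer S)
      = ⋂ m ∈ S, ⋂ x : H, ⋂ y : H,
        {b : H →WOT[ℂ] H | ((innerSL ℂ x).comp m) (b y) = (innerSL ℂ x) (b (m y))} := by
    ext b
    simp only [Set.mem_image, Set.mem_iInter, Set.mem_setOf_eq]
    constructor
    · rintro ⟨a, ha, rfl⟩ m hm x y
      have h := ha m hm
      have h2 : m (a y) = a (m y) := by
        have := congrArg (fun c => c y) h
        simpa [ContinuousLinearMap.mul_apply] using this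
      simp [ContinuousLinearMap.toWOT_apply, h2]
    · intro hb
      refine ⟨ContinuousLinearMapWOT.toCLM b, ?_, rfl⟩
      intro m hm
      ext y
      apply ext_inner_left ℂ
      intro x
      have := hb m hm x y
      simpa [ContinuousLinearMap.mul_apply, ContinuousLinearMap.toWOT_apply] using this
  rw [himg]
  refine isClosed_iInter fun m => isClosed_iInter fun _ => isClosed_iInter fun x =>
    isClosed_iInter fun y => isClosed_eq ?_ ?_
  · exact ContinuousLinearMapWOT.continuous_dual_apply y ((innerSL ℂ x).comp m)
  · exact ContinuousLinearMapWOT.continuous_dual_apply (m y) (innerSL ℂ x)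

/- STATEMENT 12: For a W*-dynamical system in GNS form (M = π_μ(A) with cyclic
separating unit vector Ω = Ω_μ, action implemented by U with θ_g = Ad U_g), with
H₀ the closed span of the eigenvectors of U, the set
T = {a ∈ M : aΩ ∈ H₀} is a weakly closed linear subspace of B(H) with θ_g(T) = T. -/
theorem eigenvector_part_weakly_closed_invariant_subspace
    {H : Type*} [NormedAddCommGroup H] [InnerProductSpace ℂ H] [CompleteSpace H]
    {G : Type*} [Group G]
    (M : VonNeumannAlgebra H) (Ω : H) (hΩ : ‖Ω‖ = 1)
    (hcyc : Dense ((fun a : H →L[ℂ] H => a Ω) '' (M : Set (H →L[ℂ] H))))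
    (hsep : ∀ a ∈ M, a Ω = 0 → a = 0)
    (U : G →* (H ≃ₗᵢ[ℂ] H)) (hUΩ : ∀ g, U g Ω = Ω)
    (hUM : ∀ g, conjAct (U g) '' (M : Set (H →L[ℂ] H)) = (M : Set (H →L[ℂ] H)))
    (H₀ : Submodule ℂ H)
    (hH₀ : H₀ = (Submodule.span ℂ
        {y : H | y ≠ 0 ∧ ∃ χ : G → ℂ, ∀ g, U g y = χ g • y}).topologicalClosure)
    (T : Set (H →L[ℂ] H))
    (hT : T = {a : H →L[ℂ] H | a ∈ M ∧ a Ω ∈ H₀}) :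
    ((0 : H →L[ℂ] H) ∈ T ∧
      (∀ a ∈ T, ∀ b ∈ T, a + b ∈ T) ∧ (∀ c : ℂ, ∀ a ∈ T, c • a ∈ T)) ∧
    IsClosed ((ContinuousLinearMapWOT.ofCLM : (H →L[ℂ] H) → (H →WOT[ℂ] H)) '' T) ∧
    ∀ g, conjAct (U g) '' T = T := by
  subst hT
  -- subspace part
  refine ⟨⟨⟨?_, ?_⟩, ?_, ?_⟩, ?_, ?_⟩
  · exact zero_mem M
  · simpa using H₀.zero_mem
  · rintro a ⟨haM, haH⟩ b ⟨hbM, hbH⟩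
    exact ⟨add_mem haM hbM, by simpa using H₀.add_mem haH hbH⟩
  · rintro c a ⟨haM, haH⟩
    exact ⟨show c • a ∈ M.toStarSubalgebra from M.toStarSubalgebra.smul_mem haM c,
      by simpa using H₀.smul_mem c haH⟩
  -- weak closedness
  · have hH₀closed : IsClosed (H₀ : Set H) := by
      rw [hH₀]; exact Submodule.isClosed_topologicalClosure _
    have hoo : H₀ᗮᗮ = H₀ := by
      rw [Submodule.orthogonal_orthogonal_eq_closure]
      exact SetLike.coe_injective (by
        rw [Submodule.topologicalClosure_coe, hH₀closed.closure_eq])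
    have hmem : ∀ v : H, v ∈ H₀ ↔ ∀ y ∈ H₀ᗮ, (inner ℂ y v : ℂ) = 0 := by
      intro v
      conv_lhs => rw [← hoo]
      exact Submodule.mem_orthogonal _ v
    have hsplit : {a : H →L[ℂ] H | a ∈ M ∧ a Ω ∈ H₀}
        = (M : Set (H →L[ℂ] H)) ∩ {a : H →L[ℂ] H | a Ω ∈ H₀} := rfl
    rw [hsplit, Set.image_inter ContinuousLinearMapWOT.ofCLM_injective]
    apply IsClosed.inter
    · rw [← M.centralizer_centralizer]
      exact isClosed_image_centralizer _
    · have himg2 : (ContinuousLinearMapWOT.ofCLM : (H →L[ℂ] H) → (H →WOT[ℂ] H)) '' {a : H →L[ℂ] H | a Ω ∈ H₀}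
          = ⋂ y ∈ H₀ᗮ, {b : H →WOT[ℂ] H | (innerSL ℂ y) (b Ω) = 0} := by
        ext b
        simp only [Set.mem_image, Set.mem_iInter, Set.mem_setOf_eq]
        constructor
        · rintro ⟨a, ha, rfl⟩ y hy
          simpa [ContinuousLinearMap.toWOT_apply] using ((hmem (a Ω)).1 ha) y hy
        · intro hb
          refine ⟨ContinuousLinearMapWOT.toCLM b,
            (hmem _).2 (fun y hy => by simpa using hb y hy), rfl⟩
      rw [himg2]
      refine isClosed_iInter fun y => isClosed_iInter fun _ => isClosed_eq ?_ continuous_const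
      exact ContinuousLinearMapWOT.continuous_dual_apply Ω (innerSL ℂ y)
  -- invariance
  · set Eset : Set H := {y : H | y ≠ 0 ∧ ∃ χ : G → ℂ, ∀ g, U g y = χ g • y} with hEdef
    have hEinv : ∀ g : G, (U g) '' Eset ⊆ Eset := by
      rintro g _ ⟨y, ⟨hy0, χ, hχ⟩, rfl⟩
      refine ⟨fun h => hy0 ((U g).map_eq_zero_iff.mp h),
        fun h => χ (g⁻¹ * h * g), fun h => ?_⟩
      have e1 : U h (U g y) = U g (U (g⁻¹ * h * g) y) := by
        have e2 : (U h) * (U g) = (U g) * (U (g⁻¹ * h * g)) := by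
          rw [← map_mul, ← map_mul]; congr 1; group
        calc U h (U g y) = ((U h) * (U g)) y := rfl
          _ = ((U g) * (U (g⁻¹ * h * g))) y := by rw [e2]
          _ = U g (U (g⁻¹ * h * g) y) := rfl
      rw [e1, hχ]
      simp
    have hinvH₀ : ∀ (g : G), ∀ v ∈ H₀, U g v ∈ H₀ := by
      intro g v hv
      rw [hH₀, ← SetLike.mem_coe, Submodule.topologicalClosure_coe] at hv ⊢
      have hsub : (U g) '' ((Submodule.span ℂ Eset : Submodule ℂ H) : Set H)
          ⊆ ((Submodule.span ℂ Eset : Submodule ℂ H) : Set H) := by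
        rintro _ ⟨w, hw, rfl⟩
        have h1 : U g w ∈ Submodule.map ((U g).toLinearEquiv : H →ₗ[ℂ] H)
            (Submodule.span ℂ Eset) := ⟨w, hw, rfl⟩
        rw [Submodule.map_span] at h1
        exact Submodule.span_mono (by simpa using hEinv g) h1
      have h3 : U g v ∈ closure ((U g) '' ((Submodule.span ℂ Eset : Submodule ℂ H) : Set H)) :=
        image_closure_subset_closure_image (U g).continuous ⟨v, hv, rfl⟩
      exact closure_mono hsub h3
    have hUΩ' : ∀ g, (U g).symm Ω = Ω := by
      intro g
      conv_lhs => rw [← hUΩ g]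
      simp
    have hsub : ∀ g : G, conjAct (U g) '' {a : H →L[ℂ] H | a ∈ M ∧ a Ω ∈ H₀}
        ⊆ {a : H →L[ℂ] H | a ∈ M ∧ a Ω ∈ H₀} := by
      rintro g _ ⟨a, ⟨haM, haH⟩, rfl⟩
      constructor
      · have h4 : conjAct (U g) a ∈ conjAct (U g) '' (M : Set (H →L[ℂ] H)) := ⟨a, haM, rfl⟩
        rw [hUM g] at h4; exact h4
      · show conjAct (U g) a Ω ∈ H₀
        rw [conjAct_apply, hUΩ' g]
        exact hinvH₀ g _ haH
    intro g
    refine Set.Subset.antisymm (hsub g) ?_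
    intro a ha
    refine ⟨conjAct (U g⁻¹) a, hsub g⁻¹ ⟨a, ha, rfl⟩, ?_⟩
    have hinv' : U g⁻¹ = (U g).symm := by rw [map_inv, LinearIsometryEquiv.inv_def]
    ext x
    show U g (U g⁻¹ (a ((U g⁻¹).symm ((U g).symm x)))) = a x
    rw [hinv']
    simp
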